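/- Let 0 < p, q ≤ ∞ and let k, n be positive integers. Then e_k(id : ℓ_p^n(ℝ) → ℓ_q^n(ℝ)) ≥ 2^{-(k-1)/n} · (vol(B_p^n)/vol(B_q^n))^{1/n}. Consequently there is a constant c_{p,q} > 0 with e_k(id : ℓ_p^n(ℝ) → ℓ_q^n(ℝ)) ≥ c_{p,q}·2^{-(k-1)/n}·n^{1/q - 1/p}. -/

import Mathlib

open scoped ENNReal

/-- The `ℓ_p` (quasi-)norm on `ℝ^n`, `0 < p ≤ ∞`. -/
noncomputable def lpnorm (p : ℝ≥0∞) {n : ℕ} (x : Fin n → ℝ) : ℝ :=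
  if p = ∞ then ⨆ i, |x i| else (∑ i, |x i| ^ p.toReal) ^ (1 / p.toReal)

/-- The `k`-th dyadic entropy number of the identity `id : ℓ_p^n(ℝ) → ℓ_q^n(ℝ)`:
the infimum of `r > 0` such that the unit ball of `ℓ_p^n` can be covered by `2^(k-1)`
balls of radius `r` in `ℓ_q^n`. -/
noncomputable def entropyLp (p q : ℝ≥0∞) (n k : ℕ) : ℝ :=
  sInf {r : ℝ | 0 < r ∧ ∃ S : Finset (Fin n → ℝ), S.card ≤ 2 ^ (k - 1) ∧
    ∀ x : Fin n → ℝ, lpnorm p x ≤ 1 → ∃ y ∈ S, lpnorm q (x - y) ≤ r}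


open Real Set Pointwise

section lp
variable {p : ℝ≥0∞} {n : ℕ}

lemma lpnorm_nonneg (x : Fin n → ℝ) : 0 ≤ lpnorm p x := by
  unfold lpnorm
  split
  · exact Real.iSup_nonneg fun i => abs_nonneg _
  · exact Real.rpow_nonneg (Finset.sum_nonneg fun i _ => Real.rpow_nonneg (abs_nonneg _) _) _

lemma abs_le_one_of_lpnorm (hp : 0 < p) {x : Fin n → ℝ} (hx : lpnorm p x ≤ 1) (i : Fin n) :
    |x i| ≤ 1 := by
  unfold lpnorm at hx
  split at hx
  · exact le_trans (le_ciSup (f := fun j => |x j|) (Set.Finite.bddAbove (Set.finite_range _)) i) hx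
  · have ht : 0 < p.toReal := ENNReal.toReal_pos hp.ne' (by assumption)
    have hsum : ∑ j, |x j| ^ p.toReal ≤ 1 := by
      by_contra h
      push_neg at h
      have := Real.rpow_lt_rpow (by norm_num) h (by positivity : (0:ℝ) < 1 / p.toReal)
      rw [Real.one_rpow] at this
      linarith
    have hterm : |x i| ^ p.toReal ≤ 1 :=
      le_trans (Finset.single_le_sum (fun j _ => Real.rpow_nonneg (abs_nonneg _) _)
        (Finset.mem_univ i)) hsum
    by_contra h
    push_neg at h
    have := Real.one_lt_rpow_iff_of_pos (by linarith : (0:ℝ) < |x i|) (y := p.toReal)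
    have h2 : 1 < |x i| ^ p.toReal := this.mpr (Or.inl ⟨h, ht⟩)
    linarith

lemma lpnorm_smul (hp : 0 < p) {c : ℝ} (hc : 0 ≤ c) (x : Fin n → ℝ) :
    lpnorm p (c • x) = c * lpnorm p x := by
  unfold lpnorm
  split
  · simp only [Pi.smul_apply, smul_eq_mul, abs_mul, abs_of_nonneg hc]
    exact (Real.mul_iSup_of_nonneg hc _).symm
  · have ht : 0 < p.toReal := ENNReal.toReal_pos hp.ne' (by assumption)
    have h1 : ∀ i : Fin n, |c * x i| ^ p.toReal = c ^ p.toReal * |x i| ^ p.toReal := by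
      intro i
      rw [abs_mul, abs_of_nonneg hc, Real.mul_rpow hc (abs_nonneg _)]
    simp only [Pi.smul_apply, smul_eq_mul, h1, ← Finset.mul_sum]
    rw [Real.mul_rpow (by positivity) (Finset.sum_nonneg fun i _ => by positivity),
      ← Real.rpow_mul hc, mul_one_div_cancel ht.ne', Real.rpow_one]

end lp

open MeasureTheory

section cube
variable {p : ℝ≥0∞} {n : ℕ}

lemma lpnorm_le_one_of_cube (hp : 0 < p) (hn : 0 < n) {x : Fin n → ℝ}
    (hx : ∀ i, |x i| ≤ (n : ℝ) ^ (-(p.toReal)⁻¹)) : lpnorm p x ≤ 1 := by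
  unfold lpnorm
  split
  · rename_i hptop
    haveI : Nonempty (Fin n) := Fin.pos_iff_nonempty.mp hn
    refine ciSup_le fun i => ?_
    simpa [hptop] using hx i
  · rename_i hptop
    have ht : 0 < p.toReal := ENNReal.toReal_pos hp.ne' hptop
    have hn' : (0:ℝ) < n := by exact_mod_cast hn
    have hsum : ∑ i, |x i| ^ p.toReal ≤ 1 := by
      have hterm : ∀ i : Fin n, |x i| ^ p.toReal ≤ (n:ℝ)⁻¹ := by
        intro i
        calc |x i| ^ p.toReal ≤ ((n : ℝ) ^ (-(p.toReal)⁻¹)) ^ p.toReal :=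
              Real.rpow_le_rpow (abs_nonneg _) (hx i) ht.le
        _ = (n:ℝ)⁻¹ := by
              rw [← Real.rpow_mul hn'.le, neg_mul, inv_mul_cancel₀ ht.ne', Real.rpow_neg_one]
      calc ∑ i, |x i| ^ p.toReal ≤ ∑ _i : Fin n, (n:ℝ)⁻¹ := Finset.sum_le_sum fun i _ => hterm i
      _ = 1 := by
          rw [Finset.sum_const, Finset.card_univ, Fintype.card_fin, nsmul_eq_mul,
            mul_inv_cancel₀ hn'.ne']
    exact Real.rpow_le_one (Finset.sum_nonneg fun i _ => Real.rpow_nonneg (abs_nonneg _) _)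
      hsum (by positivity)

lemma cube_measure (a : ℝ) (ha : 0 ≤ a) :
    volume {x : Fin n → ℝ | ∀ i, |x i| ≤ a} = ENNReal.ofReal ((2 * a) ^ n) := by
  have : {x : Fin n → ℝ | ∀ i, |x i| ≤ a} = Set.pi Set.univ fun _ : Fin n => Icc (-a) a := by
    ext x
    simp [abs_le, Set.mem_pi, forall_and, Pi.le_def]
  rw [this, volume_pi_pi]
  simp only [Real.volume_Icc, sub_neg_eq_add, Finset.prod_const, Finset.card_univ,
    Fintype.card_fin]
  rw [← ENNReal.ofReal_pow (by linarith : (0:ℝ) ≤ a + a)]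
  congr 1
  ring

lemma volume_lpball_lower (hp : 0 < p) (hn : 0 < n) :
    ENNReal.ofReal ((2 * (n : ℝ) ^ (-(p.toReal)⁻¹)) ^ n) ≤
      volume {x : Fin n → ℝ | lpnorm p x ≤ 1} := by
  have ha : (0:ℝ) ≤ (n : ℝ) ^ (-(p.toReal)⁻¹) := Real.rpow_nonneg (Nat.cast_nonneg n) _
  rw [← cube_measure _ ha]
  exact measure_mono fun x hx => lpnorm_le_one_of_cube hp hn hx

lemma volume_lpball_upper (hp : 0 < p) :
    volume {x : Fin n → ℝ | lpnorm p x ≤ 1} ≤ ENNReal.ofReal (2 ^ n) := by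
  have := cube_measure (n := n) 1 zero_le_one
  rw [mul_one] at this
  rw [← this]
  exact measure_mono fun x hx => fun i => abs_le_one_of_lpnorm hp hx i

end cube

section part1
variable {p q : ℝ≥0∞} {n : ℕ}

lemma lpnorm_le_rpow_card (hp : 0 < p) (hq : 0 < q) {x : Fin n → ℝ}
    (hx : lpnorm p x ≤ 1) : lpnorm q x ≤ (n : ℝ) ^ ((q.toReal)⁻¹) := by
  unfold lpnorm
  split
  · rename_i hqt
    rw [hqt]
    simp only [ENNReal.toReal_top, inv_zero, Real.rpow_zero]
    exact Real.iSup_le (fun i => abs_le_one_of_lpnorm hp hx i) zero_le_one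
  · rename_i hqt
    have ht : 0 < q.toReal := ENNReal.toReal_pos hq.ne' hqt
    have hsum : ∑ i, |x i| ^ q.toReal ≤ (n : ℝ) := by
      calc ∑ i, |x i| ^ q.toReal ≤ ∑ _i : Fin n, (1:ℝ) :=
            Finset.sum_le_sum fun i _ => Real.rpow_le_one (abs_nonneg _)
              (abs_le_one_of_lpnorm hp hx i) ht.le
      _ = (n : ℝ) := by simp
    calc (∑ i, |x i| ^ q.toReal) ^ (1 / q.toReal) ≤ (n : ℝ) ^ (1 / q.toReal) :=
          Real.rpow_le_rpow (Finset.sum_nonneg fun i _ => Real.rpow_nonneg (abs_nonneg _) _)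
            hsum (by positivity)
    _ = (n : ℝ) ^ ((q.toReal)⁻¹) := by rw [one_div]

lemma entropy_lower_volume (hp : 0 < p) (hq : 0 < q) (k : ℕ) (hk : 0 < k) (hn : 0 < n) :
    2 ^ (-(((k : ℝ) - 1) / n)) *
      ((volume {x : Fin n → ℝ | lpnorm p x ≤ 1}).toReal /
        (volume {x : Fin n → ℝ | lpnorm q x ≤ 1}).toReal) ^ ((n : ℝ)⁻¹) ≤
      entropyLp p q n k := by
  have hn' : (0:ℝ) < n := by exact_mod_cast hn
  set Bp := {x : Fin n → ℝ | lpnorm p x ≤ 1} with hBp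
  set Bq := {x : Fin n → ℝ | lpnorm q x ≤ 1} with hBq
  have hVp_fin : volume Bp ≠ ⊤ :=
    ne_top_of_le_ne_top ENNReal.ofReal_ne_top (volume_lpball_upper hp)
  have hVq_fin : volume Bq ≠ ⊤ :=
    ne_top_of_le_ne_top ENNReal.ofReal_ne_top (volume_lpball_upper hq)
  have hVp_pos : 0 < (volume Bp).toReal := by
    refine ENNReal.toReal_pos (fun h0 => ?_) hVp_fin
    have h1 := volume_lpball_lower hp hn
    rw [← hBp, h0, le_zero_iff, ENNReal.ofReal_eq_zero] at h1
    have : (0:ℝ) < (2 * (n : ℝ) ^ (-(p.toReal)⁻¹)) ^ n := by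
      have := Real.rpow_pos_of_pos hn' (-(p.toReal)⁻¹)
      positivity
    linarith
  have hVq_pos : 0 < (volume Bq).toReal := by
    refine ENNReal.toReal_pos (fun h0 => ?_) hVq_fin
    have h1 := volume_lpball_lower hq hn
    rw [← hBq, h0, le_zero_iff, ENNReal.ofReal_eq_zero] at h1
    have : (0:ℝ) < (2 * (n : ℝ) ^ (-(q.toReal)⁻¹)) ^ n := by
      have := Real.rpow_pos_of_pos hn' (-(q.toReal)⁻¹)
      positivity
    linarith
  set Vp := (volume Bp).toReal
  set Vq := (volume Bq).toReal
  refine le_csInf ?_ ?_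
  · refine ⟨(n : ℝ) ^ ((q.toReal)⁻¹) + 1, ?_, {0}, ?_, ?_⟩
    · have := Real.rpow_pos_of_pos hn' ((q.toReal)⁻¹)
      linarith
    · simpa using Nat.one_le_two_pow
    · intro x hx
      refine ⟨0, Finset.mem_singleton_self 0, ?_⟩
      rw [sub_zero]
      have := lpnorm_le_rpow_card hp hq hx
      linarith
  · rintro r ⟨hr0, S, hcard, hcov⟩
    have hsub : Bp ⊆ ⋃ y ∈ S, (y +ᵥ (r • Bq)) := by
      intro x hx
      obtain ⟨y, hyS, hxy⟩ := hcov x hx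
      refine Set.mem_biUnion hyS ?_
      have hw : r⁻¹ • (x - y) ∈ Bq := by
        simp only [hBq, Set.mem_setOf_eq]
        rw [lpnorm_smul hq (by positivity)]
        calc r⁻¹ * lpnorm q (x - y) ≤ r⁻¹ * r :=
              mul_le_mul_of_nonneg_left hxy (by positivity)
        _ = 1 := inv_mul_cancel₀ hr0.ne'
      refine Set.mem_vadd_set.mpr ⟨r • (r⁻¹ • (x - y)), Set.smul_mem_smul_set hw, ?_⟩
      rw [smul_smul, mul_inv_cancel₀ hr0.ne', one_smul, vadd_eq_add, add_sub_cancel]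
    have key : volume Bp ≤ ((2:ℝ≥0∞) ^ (k - 1)) * (ENNReal.ofReal (r ^ n) * volume Bq) := by
      calc volume Bp ≤ volume (⋃ y ∈ S, (y +ᵥ (r • Bq))) := measure_mono hsub
      _ ≤ ∑ y ∈ S, volume (y +ᵥ (r • Bq)) := measure_biUnion_finset_le S _
      _ = ∑ _y ∈ S, volume (r • Bq) := Finset.sum_congr rfl fun y _ => by rw [measure_vadd]
      _ = (S.card : ℝ≥0∞) * volume (r • Bq) := by rw [Finset.sum_const, nsmul_eq_mul]
      _ ≤ ((2:ℝ≥0∞) ^ (k - 1)) * volume (r • Bq) := by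
            gcongr
            calc (S.card : ℝ≥0∞) ≤ ((2 ^ (k-1) : ℕ) : ℝ≥0∞) := by exact_mod_cast hcard
            _ = (2:ℝ≥0∞) ^ (k - 1) := by push_cast; ring
      _ = ((2:ℝ≥0∞) ^ (k - 1)) * (ENNReal.ofReal (r ^ n) * volume Bq) := by
            rw [Measure.addHaar_smul, Module.finrank_fin_fun,
              abs_of_nonneg (by positivity : (0:ℝ) ≤ r ^ n)]
    have hreal : Vp ≤ (2 ^ (k-1) : ℕ) * (r ^ n * Vq) := by
      have h2 : (((2:ℝ≥0∞) ^ (k - 1)) * (ENNReal.ofReal (r ^ n) * volume Bq)).toReal =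
          (2 ^ (k-1) : ℕ) * (r ^ n * Vq) := by
        rw [ENNReal.toReal_mul, ENNReal.toReal_mul, ENNReal.toReal_ofReal (by positivity),
          ENNReal.toReal_pow, ENNReal.toReal_ofNat]
        push_cast
        ring
      rw [← h2]
      refine ENNReal.toReal_mono ?_ key
      refine ENNReal.mul_ne_top (by simp) (ENNReal.mul_ne_top ENNReal.ofReal_ne_top hVq_fin)
    -- now pure real arithmetic
    have hnne : (n:ℝ) ≠ 0 := hn'.ne'
    have hN : (0:ℝ) < (2 ^ (k-1) : ℕ) := by positivity
    refine (pow_le_pow_iff_left₀ (by positivity) hr0.le hn.ne').mp ?_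
    have hLpow : (2 ^ (-(((k : ℝ) - 1) / n)) * (Vp / Vq) ^ ((n : ℝ)⁻¹)) ^ n =
        2 ^ (-((k:ℝ) - 1)) * (Vp / Vq) := by
      rw [mul_pow, ← Real.rpow_natCast (2 ^ (-(((k:ℝ) - 1) / n))) n,
        ← Real.rpow_natCast ((Vp / Vq) ^ ((n : ℝ)⁻¹)) n,
        ← Real.rpow_mul (by norm_num : (0:ℝ) ≤ 2),
        ← Real.rpow_mul (by positivity : (0:ℝ) ≤ Vp / Vq),
        show -(((k:ℝ) - 1) / n) * n = -((k:ℝ) - 1) by field_simp,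
        show ((n:ℝ))⁻¹ * n = 1 by field_simp, Real.rpow_one]
    rw [hLpow]
    have h2k : (2:ℝ) ^ (-((k:ℝ) - 1)) = ((2 ^ (k-1) : ℕ) : ℝ)⁻¹ := by
      rw [Real.rpow_neg (by norm_num : (0:ℝ) ≤ 2)]
      congr 1
      rw [show ((k:ℝ) - 1) = ((k - 1 : ℕ) : ℝ) by
        rw [Nat.cast_sub hk]; norm_num]
      rw [Real.rpow_natCast]
      push_cast
      ring
    rw [h2k]
    have hdiv : Vp / Vq ≤ (2 ^ (k-1) : ℕ) * r ^ n := by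
      rw [div_le_iff₀ hVq_pos]
      calc Vp ≤ (2 ^ (k-1) : ℕ) * (r ^ n * Vq) := hreal
      _ = (2 ^ (k-1) : ℕ) * r ^ n * Vq := by ring
    calc ((2 ^ (k-1) : ℕ) : ℝ)⁻¹ * (Vp / Vq) ≤
          ((2 ^ (k-1) : ℕ) : ℝ)⁻¹ * ((2 ^ (k-1) : ℕ) * r ^ n) := by gcongr
    _ = r ^ n := by field_simp

end part1

section part2

lemma integrableOn_exp_neg_rpow {t : ℝ} (ht : 0 < t) :
    IntegrableOn (fun x : ℝ => Real.exp (-x ^ t)) (Ioi 0) := by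
  have hG : IntegrableOn (fun y : ℝ => y ^ (1/t - 1) * Real.exp (-y)) (Ioi 0) :=
    (Real.GammaIntegral_convergent (by positivity : (0:ℝ) < 1/t)).congr_fun
      (fun x _ => mul_comm _ _) measurableSet_Ioi
  have h := (integrableOn_Ioi_comp_rpow_iff'
    (fun y : ℝ => y ^ (1/t - 1) * Real.exp (-y)) ht.ne').mpr hG
  refine h.congr_fun (fun x hx => ?_) measurableSet_Ioi
  have hx0 : (0:ℝ) < x := hx
  simp only [smul_eq_mul]
  rw [← Real.rpow_mul hx0.le, ← mul_assoc, ← Real.rpow_add hx0,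
    show t - 1 + t * (1/t - 1) = 0 by field_simp; ring, Real.rpow_zero, one_mul]

lemma integrable_exp_neg_abs_rpow {t : ℝ} (ht : 0 < t) {b : ℝ} (hb : 1 ≤ b) :
    Integrable (fun x : ℝ => Real.exp (-b * |x| ^ t)) := by
  have hcont : Continuous (fun x : ℝ => Real.exp (-b * |x| ^ t)) := by
    exact Real.continuous_exp.comp
      (continuous_const.mul ((Real.continuous_rpow_const ht.le).comp continuous_abs))
  have hIoi : IntegrableOn (fun x : ℝ => Real.exp (-b * |x| ^ t)) (Ioi 0) := by
    refine Integrable.mono' (integrableOn_exp_neg_rpow ht) hcont.aestronglyMeasurable ?_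
    rw [ae_restrict_iff' measurableSet_Ioi]
    refine Filter.Eventually.of_forall fun x hx => ?_
    have hx0 : (0:ℝ) < x := hx
    rw [Real.norm_eq_abs, abs_of_pos (Real.exp_pos _), abs_of_pos hx0]
    refine Real.exp_le_exp.mpr ?_
    have hxt : (0:ℝ) ≤ x ^ t := Real.rpow_nonneg hx0.le _
    nlinarith
  have hIic : IntegrableOn (fun x : ℝ => Real.exp (-b * |x| ^ t)) (Iic 0) := by
    rw [← Measure.map_neg_eq_self (volume : Measure ℝ)]
    have m : MeasurableEmbedding (fun x : ℝ => -x) := (Homeomorph.neg ℝ).measurableEmbedding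
    rw [m.integrableOn_map_iff]
    simp only [Function.comp_def, abs_neg, neg_preimage, neg_Iic, neg_zero]
    exact Iff.mpr integrableOn_Ici_iff_integrableOn_Ioi hIoi
  rw [← integrableOn_univ, ← Iic_union_Ioi (a := (0:ℝ))]
  exact hIic.union hIoi

end part2

section part2b
variable {q : ℝ≥0∞} {n : ℕ}

noncomputable def Dq (q : ℝ≥0∞) : ℝ :=
  if q = ∞ then 1 else Real.exp 1 * Real.Gamma ((q.toReal)⁻¹ + 1)

lemma Dq_pos (q : ℝ≥0∞) : 0 < Dq q := by
  unfold Dq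
  split
  · norm_num
  · have : (0:ℝ) < (q.toReal)⁻¹ + 1 := by positivity
    have := Real.Gamma_pos_of_pos this
    positivity

lemma volume_lpball_upper_fine (hq : 0 < q) (hqt : q ≠ ∞) (hn : 0 < n) :
    (volume {x : Fin n → ℝ | lpnorm q x ≤ 1}).toReal ≤
      (2 * Dq q * (n : ℝ) ^ (-(q.toReal)⁻¹)) ^ n := by
  have ht : 0 < q.toReal := ENNReal.toReal_pos hq.ne' hqt
  have hn' : (0:ℝ) < n := by exact_mod_cast hn
  have hn1 : (1:ℝ) ≤ n := by exact_mod_cast hn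
  set t := q.toReal with htdef
  set S' := {x : Fin n → ℝ | ∑ i, |x i| ^ t ≤ 1} with hS'
  have hmeasS : MeasurableSet S' := by
    have hc : Continuous fun x : Fin n → ℝ => ∑ i, |x i| ^ t := by
      refine continuous_finset_sum _ fun i _ => ?_
      exact (Real.continuous_rpow_const ht.le).comp (continuous_abs.comp (continuous_apply i))
    exact (isClosed_le hc continuous_const).measurableSet
  have hsub : {x : Fin n → ℝ | lpnorm q x ≤ 1} ⊆ S' := by
    intro x hx
    simp only [Set.mem_setOf_eq] at hx ⊢
    unfold lpnorm at hx
    rw [if_neg hqt] at hx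
    by_contra h
    rw [hS', Set.mem_setOf_eq, not_le] at h
    have := Real.rpow_lt_rpow zero_le_one h (by positivity : (0:ℝ) < 1 / t)
    rw [Real.one_rpow] at this
    exact absurd hx (by rw [htdef] at this; linarith)
  have hS'fin : volume S' ≠ ⊤ := by
    have hcube : volume S' ≤ ENNReal.ofReal ((2*(1:ℝ))^n) := by
      rw [← cube_measure 1 zero_le_one]
      refine measure_mono fun x hx i => ?_
      simp only [hS', Set.mem_setOf_eq] at hx
      have hterm : |x i| ^ t ≤ 1 :=
        le_trans (Finset.single_le_sum
          (fun j _ => Real.rpow_nonneg (abs_nonneg _) _) (Finset.mem_univ i)) hx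
      by_contra hgt
      push_neg at hgt
      have := (Real.one_lt_rpow_iff_of_pos (by linarith)).mpr (Or.inl ⟨hgt, ht⟩)
      linarith
    exact ne_top_of_le_ne_top ENNReal.ofReal_ne_top hcube
  set g : ℝ → ℝ := fun u => Real.exp 1 * Real.exp (-(n:ℝ) * |u| ^ t) with hg
  have hgint : Integrable g := (integrable_exp_neg_abs_rpow ht hn1).const_mul _
  have hprod_int : Integrable fun x : Fin n → ℝ => ∏ i, g (x i) :=
    Integrable.fintype_prod fun _ => hgint
  have hpt : ∀ x : Fin n → ℝ, S'.indicator (fun _ => (1:ℝ)) x ≤ ∏ i, g (x i) := by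
    intro x
    have hprodeq : ∏ i, g (x i) = Real.exp ((n:ℝ) + ∑ i, -((n:ℝ) * |x i| ^ t)) := by
      simp only [hg]
      rw [Finset.prod_mul_distrib, Finset.prod_const, Finset.card_univ, Fintype.card_fin,
        Real.exp_one_pow, ← Real.exp_sum, ← Real.exp_add]
      congr 1
      congr 1
      refine Finset.sum_congr rfl fun i _ => by ring
    by_cases hxS : x ∈ S'
    · rw [Set.indicator_of_mem hxS]
      have hsum : ∑ i, |x i| ^ t ≤ 1 := hxS
      rw [hprodeq]
      rw [show ∑ i, -((n:ℝ) * |x i| ^ t) = -((n:ℝ) * ∑ i, |x i| ^ t) by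
        simp [Finset.mul_sum]]
      calc (1:ℝ) = Real.exp 0 := Real.exp_zero.symm
      _ ≤ _ := Real.exp_le_exp.mpr (by nlinarith)
    · rw [Set.indicator_of_notMem hxS]
      exact Finset.prod_nonneg fun i _ => by positivity
  have hind_int : Integrable (S'.indicator fun _ => (1:ℝ)) := by
    rw [integrable_indicator_iff hmeasS]
    exact integrableOn_const hS'fin
  have hint_le : ∫ x, S'.indicator (fun _ => (1:ℝ)) x ≤ ∫ x : Fin n → ℝ, ∏ i, g (x i) :=
    integral_mono hind_int hprod_int hpt
  have hleft : ∫ x, S'.indicator (fun _ => (1:ℝ)) x = (volume S').toReal := by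
    rw [integral_indicator_const _ hmeasS]
    simp
    rfl
  have hright : (∫ x : Fin n → ℝ, ∏ i, g (x i)) = (∫ u : ℝ, g u) ^ n := by
    rw [integral_fintype_prod_volume_eq_pow]
    simp
  have hg_val : (∫ u : ℝ, g u) = 2 * Dq q * (n : ℝ) ^ (-(t)⁻¹) := by
    simp only [hg]
    rw [integral_const_mul]
    rw [integral_comp_abs (f := fun y : ℝ => Real.exp (-(n:ℝ) * y ^ t))]
    rw [integral_exp_neg_mul_rpow ht hn']
    rw [Dq, if_neg hqt, ← htdef]
    rw [show (-1 : ℝ)/t = -(t)⁻¹ by field_simp, show 1/t = t⁻¹ by field_simp]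
    ring
  calc (volume {x : Fin n → ℝ | lpnorm q x ≤ 1}).toReal ≤ (volume S').toReal :=
        ENNReal.toReal_mono hS'fin (measure_mono hsub)
  _ = ∫ x, S'.indicator (fun _ => (1:ℝ)) x := hleft.symm
  _ ≤ (∫ u : ℝ, g u) ^ n := by rw [← hright]; exact hint_le
  _ = (2 * Dq q * (n : ℝ) ^ (-(t)⁻¹)) ^ n := by rw [hg_val]

end part2b

open MeasureTheory in
theorem entropy_lp_volume_lower (p q : ℝ≥0∞) (hp : 0 < p) (hq : 0 < q) :
    (∀ k n : ℕ, 0 < k → 0 < n →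
      2 ^ (-(((k : ℝ) - 1) / n)) *
        ((volume {x : Fin n → ℝ | lpnorm p x ≤ 1}).toReal /
          (volume {x : Fin n → ℝ | lpnorm q x ≤ 1}).toReal) ^ ((n : ℝ)⁻¹) ≤
        entropyLp p q n k) ∧
    ∃ c : ℝ, 0 < c ∧ ∀ k n : ℕ, 0 < k → 0 < n →
      c * 2 ^ (-(((k : ℝ) - 1) / n)) * (n : ℝ) ^ (q⁻¹.toReal - p⁻¹.toReal) ≤
        entropyLp p q n k := by
  constructor
  · intro k n hk hn
    exact entropy_lower_volume hp hq k hk hn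
  · refine ⟨(Dq q)⁻¹, inv_pos.mpr (Dq_pos q), fun k n hk hn => ?_⟩
    have hn' : (0:ℝ) < n := by exact_mod_cast hn
    have hD := Dq_pos q
    set ep := (p.toReal)⁻¹ with hep
    set eq' := (q.toReal)⁻¹ with heq'
    set Vp := (volume {x : Fin n → ℝ | lpnorm p x ≤ 1}).toReal with hVp
    set Vq := (volume {x : Fin n → ℝ | lpnorm q x ≤ 1}).toReal with hVq
    have hVp_fin : volume {x : Fin n → ℝ | lpnorm p x ≤ 1} ≠ ⊤ :=
      ne_top_of_le_ne_top ENNReal.ofReal_ne_top (volume_lpball_upper hp)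
    have hVq_fin : volume {x : Fin n → ℝ | lpnorm q x ≤ 1} ≠ ⊤ :=
      ne_top_of_le_ne_top ENNReal.ofReal_ne_top (volume_lpball_upper hq)
    have hVp_lb : (2 * (n:ℝ) ^ (-ep)) ^ n ≤ Vp := by
      have h := ENNReal.toReal_mono hVp_fin (volume_lpball_lower hp hn)
      rwa [ENNReal.toReal_ofReal (by positivity)] at h
    have hVq_pos : 0 < Vq := by
      have h := ENNReal.toReal_mono hVq_fin (volume_lpball_lower hq hn)
      rw [ENNReal.toReal_ofReal (by positivity)] at h
      have hpos : (0:ℝ) < (2 * (n : ℝ) ^ (-(q.toReal)⁻¹)) ^ n := by positivity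
      linarith
    have hVq_ub : Vq ≤ (2 * Dq q * (n:ℝ) ^ (-eq')) ^ n := by
      by_cases hqt : q = ∞
      · have h := ENNReal.toReal_mono ENNReal.ofReal_ne_top (volume_lpball_upper hq (n := n))
        rw [ENNReal.toReal_ofReal (by positivity)] at h
        have heq0 : eq' = 0 := by rw [heq', hqt]; simp
        rw [heq0, Dq, if_pos hqt]
        simpa using h
      · exact volume_lpball_upper_fine hq hqt hn
    have hxpos : (0:ℝ) < 2 * (n:ℝ) ^ (-ep) := by positivity
    have hypos : (0:ℝ) < 2 * Dq q * (n:ℝ) ^ (-eq') := by positivity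
    set a := (2 * (n:ℝ) ^ (-ep)) / (2 * Dq q * (n:ℝ) ^ (-eq')) with ha
    have ha_pos : 0 < a := div_pos hxpos hypos
    have hratio : a ^ n ≤ Vp / Vq := by
      rw [ha, div_pow]
      exact div_le_div₀ ENNReal.toReal_nonneg hVp_lb hVq_pos hVq_ub
    have haval : a = (n:ℝ) ^ (eq' - ep) / Dq q := by
      rw [ha, show eq' - ep = eq' + -ep by ring, Real.rpow_add hn',
        Real.rpow_neg hn'.le eq']
      have hne : ((n:ℝ) ^ eq') ≠ 0 := (Real.rpow_pos_of_pos hn' _).ne'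
      field_simp
    have hfin : a ≤ (Vp / Vq) ^ ((n:ℝ)⁻¹) := by
      have h1 : a = (a ^ n) ^ ((n:ℝ)⁻¹) := by
        rw [← Real.rpow_natCast a n, ← Real.rpow_mul ha_pos.le,
          mul_inv_cancel₀ hn'.ne', Real.rpow_one]
      rw [h1]
      exact Real.rpow_le_rpow (by positivity) hratio (by positivity)
    have h2pos : (0:ℝ) ≤ 2 ^ (-(((k : ℝ) - 1) / n)) := (Real.rpow_pos_of_pos two_pos _).le
    calc (Dq q)⁻¹ * 2 ^ (-(((k : ℝ) - 1) / n)) * (n : ℝ) ^ (q⁻¹.toReal - p⁻¹.toReal)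
        = 2 ^ (-(((k : ℝ) - 1) / n)) * a := by
          rw [ENNReal.toReal_inv, ENNReal.toReal_inv, ← hep, ← heq', haval]
          ring
      _ ≤ 2 ^ (-(((k : ℝ) - 1) / n)) * ((Vp / Vq) ^ ((n:ℝ)⁻¹)) :=
          mul_le_mul_of_nonneg_left hfin h2pos
      _ ≤ entropyLp p q n k := entropy_lower_volume hp hq k hk hn
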